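/- Let A be a 1-bounded turning arc divided into n consecutive subarcs A₁,…,A_n of equal diameter, and also into k consecutive subarcs A'₁,…,A'_k of equal diameter, where the common diameter of the A'_j is strictly greater than twice the common diameter of the A_i. Then 2k + 1 ≤ n. -/

import Mathlib

open Metric Set

noncomputable section

abbrev I01 := Set.Icc (0 : ℝ) 1

/-- The subarc of a Jordan arc `A` (parametrized by `e : I01 ≃ₜ A`) between `x` and `y`. -/
def subarc {A : Type*} [MetricSpace A] (e : I01 ≃ₜ A) (x y : A) : Set A :=
  e '' Set.uIcc (e.symm x) (e.symm y)

/-- `s` divides the arc `A` into `n` consecutive subarcs, each of diameter `D`. -/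
def IsEqualDivision {A : Type*} [MetricSpace A] (e : I01 ≃ₜ A)
    (n : ℕ) (s : ℕ → I01) (D : ℝ) : Prop :=
  s 0 = ⟨0, by norm_num⟩ ∧ s n = ⟨1, by norm_num⟩ ∧ (∀ i < n, s i < s (i + 1)) ∧
    ∀ i < n, diam (e '' Set.Icc (s i) (s (i + 1))) = D


/-- If a `1`-bounded turning arc is divided into `n` equal subarcs of diameter `D` and into
`k` equal subarcs of diameter `D' > 2D`, then `2k + 1 ≤ n`. -/
theorem equal_division_covering_bound
    {A : Type*} [MetricSpace A] (e : I01 ≃ₜ A)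
    (h1bt : ∀ x y : A, diam (subarc e x y) = dist x y)
    (n k : ℕ) (hn : 1 ≤ n) (hk : 1 ≤ k) (s t : ℕ → I01) (D D' : ℝ)
    (hdiv : IsEqualDivision e n s D) (hdiv' : IsEqualDivision e k t D')
    (hDD' : 2 * D < D') :
    2 * k + 1 ≤ n := by
  obtain ⟨hs0, hsn, hsmono, hsdiam⟩ := hdiv
  obtain ⟨ht0, htk, htmono, htdiam⟩ := hdiv'
  haveI : CompactSpace A := e.symm.symm.compactSpace
  have hbdd : ∀ S : Set A, Bornology.IsBounded S := fun S =>
    isCompact_univ.isBounded.subset (Set.subset_univ S)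
  have hD0 : 0 ≤ D := by
    rw [← hsdiam 0 hn]; exact diam_nonneg
  have hone : ∀ x : I01, x ≤ ⟨1, by norm_num⟩ := fun x => Subtype.coe_le_coe.mp x.2.2
  have key : ∀ j, j ≤ k → 2 * j ≤ n ∧ s (2 * j) ≤ t j ∧ (j ≠ 0 → s (2 * j) < t j) := by
    intro j
    induction j with
    | zero =>
      intro _
      refine ⟨Nat.zero_le _, ?_, fun h => absurd rfl h⟩
      simp only [Nat.mul_zero, hs0, ht0, le_refl]
    | succ j ih =>
      intro hjk
      have hj : j < k := hjk
      obtain ⟨h2jn, hle, -⟩ := ih (le_of_lt hj)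
      have htj : t j < t (j + 1) := htmono j hj
      have hDj' : diam (e '' Set.Icc (t j) (t (j + 1))) = D' := htdiam j hj
      have hD'pos : D ≤ 2 * D := by linarith
      have h2 : 2 * (j + 1) ≤ n := by
        by_contra h
        push_neg at h
        have hcase : n = 2 * j ∨ n = 2 * j + 1 := by omega
        rcases hcase with hc | hc
        · have : (⟨1, by norm_num⟩ : I01) ≤ t j := by rw [← hsn, hc]; exact hle
          exact absurd (lt_of_le_of_lt this htj) (not_lt.mpr (hone _))
        · have h2jlt : 2 * j < n := by omega
          have hsub : Set.Icc (t j) (t (j + 1)) ⊆ Set.Icc (s (2 * j)) (s (2 * j + 1)) := by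
            apply Set.Icc_subset_Icc hle
            rw [← hc, hsn]; exact hone _
          have := diam_mono (Set.image_mono (f := e) hsub) (hbdd _)
          rw [hDj', hsdiam (2 * j) h2jlt] at this
          linarith
      have h2jlt : 2 * j < n := by omega
      have h2j1lt : 2 * j + 1 < n := by omega
      have hs01 : s (2 * j) ≤ s (2 * j + 1) := le_of_lt (hsmono _ h2jlt)
      have hs12 : s (2 * j + 1) ≤ s (2 * j + 2) := le_of_lt (hsmono _ h2j1lt)
      have hsplit : Set.Icc (s (2 * j)) (s (2 * j + 2)) =
          Set.Icc (s (2 * j)) (s (2 * j + 1)) ∪ Set.Icc (s (2 * j + 1)) (s (2 * j + 2)) :=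
        (Set.Icc_union_Icc_eq_Icc hs01 hs12).symm
      have hdiam2 : diam (e '' Set.Icc (s (2 * j)) (s (2 * j + 2))) ≤ 2 * D := by
        rw [hsplit, Set.image_union]
        have hne : ((e '' Set.Icc (s (2 * j)) (s (2 * j + 1))) ∩
            (e '' Set.Icc (s (2 * j + 1)) (s (2 * j + 2)))).Nonempty :=
          ⟨e (s (2 * j + 1)),
            Set.mem_image_of_mem e (Set.right_mem_Icc.mpr hs01),
            Set.mem_image_of_mem e (Set.left_mem_Icc.mpr hs12)⟩
        calc diam _ ≤ _ + _ := diam_union' hne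
          _ ≤ 2 * D := by rw [hsdiam (2 * j) h2jlt, hsdiam (2 * j + 1) h2j1lt]; linarith
      have hstrict : s (2 * (j + 1)) < t (j + 1) := by
        by_contra h
        push_neg at h
        have hsub : Set.Icc (t j) (t (j + 1)) ⊆ Set.Icc (s (2 * j)) (s (2 * j + 2)) := by
          apply Set.Icc_subset_Icc hle
          simpa [Nat.mul_succ] using h
        have := diam_mono (Set.image_mono (f := e) hsub) (hbdd _)
        rw [hDj'] at this
        have : D' ≤ 2 * D := le_trans this hdiam2
        linarith
      exact ⟨h2, le_of_lt hstrict, fun _ => hstrict⟩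
  obtain ⟨h2k, -, hlt⟩ := key k le_rfl
  have hlt' := hlt (by omega)
  rcases eq_or_lt_of_le h2k with heq | hlt2
  · exfalso
    rw [heq, hsn, htk] at hlt'
    exact absurd hlt' (lt_irrefl _)
  · omega
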